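/- Let n ≥ 3 and let ξ, η ∈ ℝⁿ be linearly independent vectors. Suppose a, b ∈ ℝⁿ satisfy the matrix equation Iₙ[(b·η) − (a·ξ)] = n[b⊙η − a⊙ξ], where x⊙y := ½(x⊗y + y⊗x) denotes the symmetric tensor product and Iₙ the identity matrix. Then a⊙ξ = b⊙η and a·ξ = b·η. -/

import Mathlib

open Matrix

/-- symmetric tensor product of two vectors: `x ⊙ y = ½(x⊗y + y⊗x)` -/
noncomputable def symProd {n : ℕ} (x y : Fin n → ℝ) : Matrix (Fin n) (Fin n) ℝ :=
  (2 : ℝ)⁻¹ • (Matrix.vecMulVec x y + Matrix.vecMulVec y x)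

lemma vecMulVec_mulVec' {n : ℕ} (x y v : Fin n → ℝ) :
    Matrix.vecMulVec x y *ᵥ v = (dotProduct y v) • x := by
  funext i
  simp [Matrix.vecMulVec_apply, Matrix.mulVec, dotProduct, Finset.mul_sum,
    Finset.sum_mul, mul_comm, mul_left_comm]

/-- If `n ≥ 3`, `ξ, η` are linearly independent and
`Iₙ[(b·η) − (a·ξ)] = n[b⊙η − a⊙ξ]`, then `a⊙ξ = b⊙η` and `a·ξ = b·η`. -/
theorem stmt1 (n : ℕ) (hn : 3 ≤ n) (ξ η a b : Fin n → ℝ)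
    (hli : LinearIndependent ℝ ![ξ, η])
    (heq : (dotProduct b η - dotProduct a ξ) • (1 : Matrix (Fin n) (Fin n) ℝ) =
      (n : ℝ) • (symProd b η - symProd a ξ)) :
    symProd a ξ = symProd b η ∧ dotProduct a ξ = dotProduct b η := by
  -- find a nonzero vector v with ξ ⬝ᵥ v = 0 and η ⬝ᵥ v = 0
  have hninj : ¬ Function.Injective ((Matrix.of ![ξ, η]).mulVecLin) := by
    intro h
    have := LinearMap.finrank_le_finrank_of_injective h
    simp [Module.finrank_pi] at this
    omega
  rw [← LinearMap.ker_eq_bot] at hninj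
  obtain ⟨v, hvker, hv0⟩ := Submodule.exists_mem_ne_zero_of_ne_bot hninj
  have hvker' : (Matrix.of ![ξ, η]) *ᵥ v = 0 := hvker
  have hξv : dotProduct ξ v = 0 := congrFun hvker' 0
  have hηv : dotProduct η v = 0 := congrFun hvker' 1
  have hvξ : dotProduct v ξ = 0 := by rw [dotProduct_comm]; exact hξv
  have hvη : dotProduct v η = 0 := by rw [dotProduct_comm]; exact hηv
  have key := congrArg (fun M : Matrix (Fin n) (Fin n) ℝ => dotProduct v (M *ᵥ v)) heq
  simp only [Matrix.smul_mulVec, Matrix.one_mulVec, Matrix.sub_mulVec,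
    Matrix.add_mulVec, dotProduct_smul, dotProduct_sub, dotProduct_add,
    symProd, vecMulVec_mulVec', smul_eq_mul, hξv, hηv, hvξ, hvη, mul_zero, zero_mul, sub_zero,
    dotProduct_zero, smul_dotProduct, dotProduct_smul] at key
  have hvv : dotProduct v v ≠ 0 := fun h => hv0 (dotProduct_self_eq_zero.mp h)
  have hc : dotProduct b η - dotProduct a ξ = 0 := by
    rcases mul_eq_zero.mp (by linarith [key] : (dotProduct b η - dotProduct a ξ) * dotProduct v v = 0) with h | h
    · exact h
    · exact absurd h hvv
  have hn0 : (n : ℝ) ≠ 0 := by positivity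
  have hM : symProd b η - symProd a ξ = 0 := by
    have := heq
    rw [hc, zero_smul] at this
    exact (smul_eq_zero.mp this.symm).resolve_left hn0
  constructor
  · have := sub_eq_zero.mp hM
    exact this.symm
  · linarith [sub_eq_zero.mp (show dotProduct b η - dotProduct a ξ = 0 from hc)]
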